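/- Let x ∈ J and let {Iᵢ}_{i∈F} be an x-norming family of disjoint intervals (i.e., ∑_{i∈F} |∑_{k∈Iᵢ} x(k)|² = ‖x‖_J²). Then the support of x is contained in ∪_{i∈F} Iᵢ. -/

import Mathlib

open Filter Topology Classical

noncomputable section

/-- Admissible finite families of pairwise disjoint, increasingly ordered intervals
`[f i .1, f i .2]` of `ℕ`. -/
def Admissible (n : ℕ) (f : Fin n → ℕ × ℕ) : Prop :=
  (∀ i, (f i).1 ≤ (f i).2) ∧ ∀ i j : Fin n, i < j → (f i).2 < (f j).1

/-- The set of estimates appearing in the definition of the James norm. -/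
def estimates (x : ℕ → ℝ) : Set ℝ :=
  {r | ∃ n, ∃ f : Fin n → ℕ × ℕ, Admissible n f ∧
    r = Real.sqrt (∑ i, (∑ k ∈ Finset.Icc (f i).1 (f i).2, x k) ^ 2)}

/-- `x` belongs to the James space `J`. -/
def MemJ (x : ℕ → ℝ) : Prop := BddAbove (estimates x)

/-- The James norm. -/
def jamesNorm (x : ℕ → ℝ) : ℝ := sSup (estimates x)

/-- The ℓ² norm. -/
def l2Norm (x : ℕ → ℝ) : ℝ := Real.sqrt (∑' k, (x k) ^ 2)

/-- The closed unit ball of the James space. -/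
def ballJ : Set (ℕ → ℝ) := {x | MemJ x ∧ jamesNorm x ≤ 1}

/-- The support of a sequence. -/
def supp (x : ℕ → ℝ) : Set ℕ := {n | x n ≠ 0}

/-- The (possibly infinite) sum of `x` over a subset `I` of `ℕ`,
as the limit of the partial sums. -/
def setSum (x : ℕ → ℝ) (I : Set ℕ) : ℝ :=
  limUnder atTop (fun N => ∑ k ∈ Finset.range N, if k ∈ I then x k else 0)

/-- An `x`-norming family: a (finite or infinite) family of pairwise disjoint
nonempty intervals of `ℕ`, indexed by an initial segment `F` of `ℕ`, ordered
increasingly, whose interval sums exist and realize the James norm of `x`. -/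
structure NormingFamily (x : ℕ → ℝ) where
  F : Set ℕ
  F_nonempty : F.Nonempty
  initial : ∀ ⦃m n : ℕ⦄, m ≤ n → n ∈ F → m ∈ F
  I : ℕ → Set ℕ
  I_nonempty : ∀ i ∈ F, (I i).Nonempty
  I_interval : ∀ i ∈ F, (I i).OrdConnected
  ordered : ∀ i ∈ F, ∀ j ∈ F, i < j → ∀ a ∈ I i, ∀ b ∈ I j, a < b
  sums_exist : ∀ i ∈ F, ∃ l : ℝ,
    Tendsto (fun N => ∑ k ∈ Finset.range N, if k ∈ I i then x k else 0) atTop (𝓝 l)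
  norming : ∑' i : F, (setSum x (I i)) ^ 2 = (jamesNorm x) ^ 2

/-- An `x`-norming partition: an `x`-norming family whose intervals cover the
support of `x`, every interval has its minimum in the support, every non-final
interval has its maximum in the support, and the final interval does not extend
beyond the supremum of the support. -/
structure NormingPartition (x : ℕ → ℝ) extends NormingFamily x where
  covers : supp x ⊆ ⋃ i ∈ F, I i
  min_in_supp : ∀ i ∈ F, ∃ m ∈ I i ∩ supp x, ∀ k ∈ I i, m ≤ k
  max_in_supp : ∀ i ∈ F, (∃ j ∈ F, i < j) → ∃ m ∈ I i ∩ supp x, ∀ k ∈ I i, k ≤ m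
  bounded_by_supp : ∀ i ∈ F, ∀ k ∈ I i, ∃ m ∈ supp x, k ≤ m

/-- `n₁ < n₂` are consecutive elements of the support of `x`. -/
def Consecutive (x : ℕ → ℝ) (n₁ n₂ : ℕ) : Prop :=
  n₁ ∈ supp x ∧ n₂ ∈ supp x ∧ n₁ < n₂ ∧ ∀ k, n₁ < k → k < n₂ → x k = 0

end

lemma sep_mem_estimates (x : ℕ → ℝ) (n : ℕ) (f : Fin n → ℕ × ℕ)
    (h1 : ∀ i, (f i).1 ≤ (f i).2)
    (h2 : ∀ i j, i ≠ j → (f i).2 < (f j).1 ∨ (f j).2 < (f i).1) :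
    Real.sqrt (∑ i, (∑ k ∈ Finset.Icc (f i).1 (f i).2, x k) ^ 2) ∈ estimates x := by
  set σ := Tuple.sort (fun i => (f i).1) with hσ
  have hmono : Monotone ((fun i => (f i).1) ∘ σ) := Tuple.monotone_sort _
  refine ⟨n, f ∘ σ, ⟨fun i => h1 _, fun i j hij => ?_⟩, ?_⟩
  · have hne : σ i ≠ σ j := fun h => absurd (σ.injective h) hij.ne
    rcases h2 (σ i) (σ j) hne with h | h
    · exact h
    · have h3 : (f (σ i)).1 ≤ (f (σ j)).1 := hmono hij.le
      have := h1 (σ j)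
      omega
  · rw [← Equiv.sum_comp σ (fun i => (∑ k ∈ Finset.Icc (f i).1 (f i).2, x k) ^ 2)]
    rfl

lemma pairs_mem_estimates (x : ℕ → ℝ) (S : Finset (ℕ × ℕ)) (h1 : ∀ p ∈ S, p.1 ≤ p.2)
    (h2 : ∀ p ∈ S, ∀ q ∈ S, p ≠ q → p.2 < q.1 ∨ q.2 < p.1) :
    Real.sqrt (∑ p ∈ S, (∑ k ∈ Finset.Icc p.1 p.2, x k) ^ 2) ∈ estimates x := by
  have e := S.equivFin
  have key : ∑ p ∈ S, (∑ k ∈ Finset.Icc p.1 p.2, x k) ^ 2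
      = ∑ i : Fin S.card, (∑ k ∈ Finset.Icc ((e.symm i : ℕ × ℕ)).1 ((e.symm i : ℕ × ℕ)).2, x k) ^ 2 := by
    rw [← Finset.sum_attach S (fun p => (∑ k ∈ Finset.Icc p.1 p.2, x k) ^ 2)]
    exact (Equiv.sum_comp e.symm (fun p : ↥S => (∑ k ∈ Finset.Icc (p : ℕ × ℕ).1 (p : ℕ × ℕ).2, x k) ^ 2)).symm
  rw [key]
  refine sep_mem_estimates x S.card (fun i => (e.symm i : ℕ × ℕ))
    (fun i => h1 _ (e.symm i).2) (fun i j hij => ?_)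
  refine h2 _ (e.symm i).2 _ (e.symm j).2 ?_
  intro h
  exact hij (e.symm.injective (Subtype.coe_injective h))

lemma zero_mem_estimates (x : ℕ → ℝ) : (0 : ℝ) ∈ estimates x :=
  ⟨0, fun i => i.elim0, ⟨fun i => i.elim0, fun i => i.elim0⟩, by simp⟩

lemma abs_le_jamesNorm (x : ℕ → ℝ) (hx : MemJ x) (k : ℕ) : |x k| ≤ jamesNorm x := by
  refine le_csSup hx ?_
  refine ⟨1, fun _ => (k, k), ⟨fun _ => le_rfl, fun i j hij => absurd (Subsingleton.elim i j) hij.ne⟩, ?_⟩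
  simp [Real.sqrt_sq_eq_abs]

lemma jamesNorm_nonneg (x : ℕ → ℝ) (hx : MemJ x) : 0 ≤ jamesNorm x :=
  le_csSup hx (zero_mem_estimates x)

theorem stmt6 (x : ℕ → ℝ) (hx : MemJ x) (P : NormingFamily x) :
    supp x ⊆ ⋃ i ∈ P.F, P.I i := by
  intro n₀ hn₀
  by_contra hno
  simp only [Set.mem_iUnion, not_exists] at hno
  -- hno : ∀ i, ¬ ∃ h : i ∈ P.F, n₀ ∈ P.I i  (shape may vary)
  have hno' : ∀ i ∈ P.F, n₀ ∉ P.I i := fun i hi hmem => hno i hi hmem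
  have hxn : x n₀ ≠ 0 := hn₀
  set c : ℝ := x n₀ ^ 2 with hc
  have hc0 : 0 < c := by positivity
  set L : ℝ := jamesNorm x ^ 2 with hL
  have hnorm0 : 0 ≤ jamesNorm x := jamesNorm_nonneg x hx
  have hL0 : 0 ≤ L := sq_nonneg _
  set g : ↥P.F → ℝ := fun i => (setSum x (P.I i)) ^ 2 with hg
  have hsum : ∑' i, g i = L := P.norming
  by_cases hs : Summable g
  · -- choose finite T₀ with partial sum close to L
    have hhs : HasSum g L := hsum ▸ hs.hasSum
    have h1 : ∀ᶠ T in (atTop : Filter (Finset ↥P.F)), L - c/4 < ∑ i ∈ T, g i :=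
      hhs.eventually (eventually_gt_nhds (by linarith))
    obtain ⟨T₀, hT₀⟩ := h1.exists
    -- partial sums
    set p : ℕ → ℕ → ℝ := fun i N => ∑ k ∈ Finset.range N, if k ∈ P.I i then x k else 0 with hp
    have hptend : ∀ i ∈ P.F, Tendsto (fun N => p i N) atTop (𝓝 (setSum x (P.I i))) := by
      intro i hi
      obtain ⟨l, hl⟩ := P.sums_exist i hi
      have : setSum x (P.I i) = l := hl.limUnder_eq
      rw [this]; exact hl
    have hΦ : Tendsto (fun N => ∑ i ∈ T₀, (p ↑i N) ^ 2) atTop (𝓝 (∑ i ∈ T₀, g i)) := by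
      refine tendsto_finset_sum _ (fun i _ => ?_)
      exact ((hptend ↑i i.2).pow 2)
    have h2 : ∀ᶠ N in atTop, L - c/2 < ∑ i ∈ T₀, (p ↑i N) ^ 2 :=
      hΦ.eventually (eventually_gt_nhds (by linarith))
    obtain ⟨N, hN⟩ := h2.exists
    -- truncated intervals as finsets
    set Sf : ↥P.F → Finset ℕ := fun i => (Finset.range N).filter (fun k => k ∈ P.I ↑i) with hSf
    have hpS : ∀ i : ↥P.F, p ↑i N = ∑ k ∈ Sf i, x k := by
      intro i
      rw [hSf, Finset.sum_filter]
    set T₁ : Finset ↥P.F := T₀.filter (fun i => (Sf i).Nonempty) with hT₁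
    have hsum10 : ∑ i ∈ T₁, (p ↑i N) ^ 2 = ∑ i ∈ T₀, (p ↑i N) ^ 2 := by
      refine Finset.sum_filter_of_ne (fun i _ hne => ?_)
      by_contra hempty
      rw [Finset.not_nonempty_iff_eq_empty] at hempty
      rw [hpS i, hempty] at hne
      simp at hne
    -- pairs
    set pr : ↥T₁ → ℕ × ℕ := fun i =>
      ((Sf ↑i).min' (Finset.mem_filter.mp i.2).2, (Sf ↑i).max' (Finset.mem_filter.mp i.2).2) with hpr
    have hSfIcc : ∀ i : ↥T₁, Sf ↑i = Finset.Icc (pr i).1 (pr i).2 := by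
      intro i
      have hne := (Finset.mem_filter.mp i.2).2
      apply Finset.ext
      intro k
      simp only [Finset.mem_Icc]
      constructor
      · intro hk
        exact ⟨Finset.min'_le _ _ hk, Finset.le_max' _ _ hk⟩
      · intro ⟨h1', h2'⟩
        have hmin := Finset.mem_filter.mp (Finset.min'_mem (Sf i.1) hne)
        have hmax := Finset.mem_filter.mp (Finset.max'_mem (Sf i.1) hne)
        have hoc := P.I_interval i.1.1 i.1.2
        refine Finset.mem_filter.mpr ⟨Finset.mem_range.mpr ?_, hoc.out hmin.2 hmax.2 ⟨h1', h2'⟩⟩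
        exact lt_of_le_of_lt h2' (Finset.mem_range.mp hmax.1)
    have hprmem : ∀ i : ↥T₁, (pr i).1 ∈ P.I i.1.1 ∧ (pr i).2 ∈ P.I i.1.1 := by
      intro i
      have hne := (Finset.mem_filter.mp i.2).2
      have hmin := Finset.mem_filter.mp (Finset.min'_mem (Sf i.1) hne)
      have hmax := Finset.mem_filter.mp (Finset.max'_mem (Sf i.1) hne)
      exact ⟨hmin.2, hmax.2⟩
    -- separation between distinct intervals
    have hsep : ∀ i j : ↥T₁, i ≠ j → (pr i).2 < (pr j).1 ∨ (pr j).2 < (pr i).1 := by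
      intro i j hij
      have hijn : i.1.1 ≠ j.1.1 := fun h => hij (Subtype.ext (Subtype.ext h))
      rcases lt_or_gt_of_ne hijn with h | h
      · left
        exact P.ordered _ i.1.2 _ j.1.2 h _ (hprmem i).2 _ (hprmem j).1
      · right
        exact P.ordered _ j.1.2 _ i.1.2 h _ (hprmem j).2 _ (hprmem i).1
    have hprinj : Function.Injective pr := by
      intro i j h
      by_contra hij
      rcases hsep i j hij with hlt | hlt <;>
        · rw [h] at hlt
          have hne := (Finset.mem_filter.mp j.2).2
          have : (pr j).1 ≤ (pr j).2 := Finset.min'_le _ _ (Finset.max'_mem (Sf j.1) hne)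
          omega
    -- build pair finset
    set S : Finset (ℕ × ℕ) := Finset.univ.image pr with hS
    have hn₀notin : ∀ q ∈ S, n₀ < q.1 ∨ q.2 < n₀ := by
      intro q hq
      rw [hS] at hq
      obtain ⟨i, _, rfl⟩ := Finset.mem_image.mp hq
      have hi1 := (hprmem i).1
      have hi2 := (hprmem i).2
      have hIi := P.I_interval i.1.1 i.1.2
      by_contra hcon
      push_neg at hcon
      exact hno' _ i.1.2 (hIi.out hi1 hi2 ⟨hcon.1, hcon.2⟩)
    set S' : Finset (ℕ × ℕ) := insert (n₀, n₀) S with hS'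
    have hn₀S : (n₀, n₀) ∉ S := by
      intro h
      rcases hn₀notin _ h with h' | h' <;> simp at h'
    have hS'1 : ∀ q ∈ S', q.1 ≤ q.2 := by
      intro q hq
      rw [hS', Finset.mem_insert] at hq
      rcases hq with rfl | hq
      · exact le_rfl
      · obtain ⟨i, _, rfl⟩ := Finset.mem_image.mp hq
        have hne := (Finset.mem_filter.mp i.2).2
        exact Finset.min'_le _ _ (Finset.max'_mem (Sf i.1) hne)
    have hS'2 : ∀ q ∈ S', ∀ r ∈ S', q ≠ r → q.2 < r.1 ∨ r.2 < q.1 := by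
      intro q hq r hr hqr
      rw [hS', Finset.mem_insert] at hq hr
      rcases hq with rfl | hq
      · rcases hr with rfl | hr
        · exact absurd rfl hqr
        · rcases hn₀notin r hr with h | h
          · left; exact h
          · right; exact h
      · rcases hr with rfl | hr
        · rcases hn₀notin q hq with h | h
          · right; exact h
          · left; exact h
        · obtain ⟨i, _, rfl⟩ := Finset.mem_image.mp hq
          obtain ⟨j, _, rfl⟩ := Finset.mem_image.mp hr
          exact hsep i j (fun h => hqr (congrArg pr h))
    have hest := pairs_mem_estimates x S' hS'1 hS'2
    have hval : ∑ q ∈ S', (∑ k ∈ Finset.Icc q.1 q.2, x k) ^ 2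
        = c + ∑ i ∈ T₀, (p ↑i N) ^ 2 := by
      rw [hS', Finset.sum_insert hn₀S]
      congr 1
      · simp [hc]
      · rw [hS, Finset.sum_image (fun i _ j _ h => hprinj h)]
        rw [← hsum10, ← Finset.sum_attach T₁ (fun i => (p ↑i N) ^ 2)]
        refine Finset.sum_congr rfl (fun i _ => ?_)
        rw [hpS, hSfIcc i]
    rw [hval] at hest
    have hle : Real.sqrt (c + ∑ i ∈ T₀, (p ↑i N) ^ 2) ≤ jamesNorm x := le_csSup hx hest
    have hgt : jamesNorm x < Real.sqrt (c + ∑ i ∈ T₀, (p ↑i N) ^ 2) := by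
      have h3 : L < c + ∑ i ∈ T₀, (p ↑i N) ^ 2 := by linarith
      calc jamesNorm x = Real.sqrt L := by rw [hL, Real.sqrt_sq hnorm0]
        _ < _ := Real.sqrt_lt_sqrt hL0 h3
    linarith
  · have h0 : ∑' i, g i = 0 := tsum_eq_zero_of_not_summable hs
    have habs := abs_le_jamesNorm x hx n₀
    have : c ≤ L := by
      show x n₀ ^ 2 ≤ jamesNorm x ^ 2
      rw [← sq_abs (x n₀)]
      exact pow_le_pow_left₀ (abs_nonneg _) habs 2
    rw [h0] at hsum
    linarith
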